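/- Let n ≥ 16 with 4 | n, partition {1,...,n} into S_1,...,S_4 by residue mod 4, and let G_1, G_2, G_3, G_4 be as in the degree-4 algorithm: G_1 = 4-sets of shape (2 in S_i, 1 in S_{i+1}, 1 in S_{i+2}); G_2 = 4-sets of shape (2 in S_i, 2 in S_j), i < j; G_3 = 4-sets of shape (3 in S_i, 1 in S_{i-1}); G_4 = 4-sets within one S_i (indices cyclic mod 4). Then every 5-element subset of {1,...,n} contains some element of G_1 ∪ G_2 ∪ G_3 ∪ G_4. -/

import Mathlib

open Finset

attribute [local instance] Classical.propDecidable

/-- `S_i ⊆ {1,…,n}`: the elements congruent to `i` mod 4. -/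
noncomputable def resClass4 (n i : ℕ) : Finset ℕ :=
  (Finset.Icc 1 n).filter (fun x => x % 4 = i % 4)

/-- `G_1`: 4-element subsets with two elements in `S_i`, one in `S_{i+1}` and one in
`S_{i+2}` (indices cyclic mod 4). -/
noncomputable def G1deg4 (n : ℕ) : Finset (Finset ℕ) :=
  ((Finset.Icc 1 n).powersetCard 4).filter (fun T => ∃ i ∈ Finset.Icc 1 4,
    (T ∩ resClass4 n i).card = 2 ∧ (T ∩ resClass4 n (i + 1)).card = 1 ∧
      (T ∩ resClass4 n (i + 2)).card = 1)

/-- `G_2`: 4-element subsets with two elements in `S_i` and two in `S_j`, `i < j`. -/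
noncomputable def G2deg4 (n : ℕ) : Finset (Finset ℕ) :=
  ((Finset.Icc 1 n).powersetCard 4).filter (fun T => ∃ i ∈ Finset.Icc 1 4,
    ∃ j ∈ Finset.Icc 1 4, i < j ∧
      (T ∩ resClass4 n i).card = 2 ∧ (T ∩ resClass4 n j).card = 2)

/-- `G_3`: 4-element subsets with three elements in `S_i` and one in `S_{i-1}`
(indices cyclic mod 4, so `S_{i-1} = S_{i+3}`). -/
noncomputable def G3deg4 (n : ℕ) : Finset (Finset ℕ) :=
  ((Finset.Icc 1 n).powersetCard 4).filter (fun T => ∃ i ∈ Finset.Icc 1 4,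
    (T ∩ resClass4 n i).card = 3 ∧ (T ∩ resClass4 n (i + 3)).card = 1)

/-- `G_4`: 4-element subsets contained in a single residue class mod 4. -/
noncomputable def G4deg4 (n : ℕ) : Finset (Finset ℕ) :=
  ((Finset.Icc 1 n).powersetCard 4).filter (fun T => ∃ i ∈ Finset.Icc 1 4,
    T ⊆ resClass4 n i)

lemma inter_resClass (n i : ℕ) (T : Finset ℕ) (hT : T ⊆ Finset.Icc 1 n) :
    T ∩ resClass4 n i = T.filter (fun x => x % 4 = i % 4) := by
  ext x
  simp only [resClass4, Finset.mem_inter, Finset.mem_filter]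
  exact ⟨fun ⟨h1, _, h2⟩ => ⟨h1, h2⟩, fun ⟨h1, h2⟩ => ⟨h1, hT h1, h2⟩⟩

lemma card_split (S : Finset ℕ) :
    S.card = (S.filter (fun x => x % 4 = 0)).card + (S.filter (fun x => x % 4 = 1)).card
      + (S.filter (fun x => x % 4 = 2)).card + (S.filter (fun x => x % 4 = 3)).card := by
  have d : ∀ a b : ℕ, a ≠ b →
      Disjoint (S.filter (fun x => x % 4 = a)) (S.filter (fun x => x % 4 = b)) := by
    intro a b hab
    rw [Finset.disjoint_left]
    intro x hx hx'
    rw [Finset.mem_filter] at hx hx'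
    omega
  have hU : S = (S.filter (fun x => x % 4 = 0)) ∪ (S.filter (fun x => x % 4 = 1))
      ∪ (S.filter (fun x => x % 4 = 2)) ∪ (S.filter (fun x => x % 4 = 3)) := by
    ext x
    simp only [Finset.mem_union, Finset.mem_filter]
    have : x % 4 = 0 ∨ x % 4 = 1 ∨ x % 4 = 2 ∨ x % 4 = 3 := by omega
    tauto
  have hD2 : Disjoint ((S.filter (fun x => x % 4 = 0)) ∪ (S.filter (fun x => x % 4 = 1)))
      (S.filter (fun x => x % 4 = 2)) := by
    rw [Finset.disjoint_union_left]
    exact ⟨d 0 2 (by norm_num), d 1 2 (by norm_num)⟩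
  have hD3 : Disjoint ((S.filter (fun x => x % 4 = 0)) ∪ (S.filter (fun x => x % 4 = 1))
      ∪ (S.filter (fun x => x % 4 = 2))) (S.filter (fun x => x % 4 = 3)) := by
    rw [Finset.disjoint_union_left, Finset.disjoint_union_left]
    exact ⟨⟨d 0 3 (by norm_num), d 1 3 (by norm_num)⟩, d 2 3 (by norm_num)⟩
  conv_lhs => rw [hU]
  rw [Finset.card_union_of_disjoint hD3, Finset.card_union_of_disjoint hD2,
    Finset.card_union_of_disjoint (d 0 1 (by norm_num))]

lemma build (Q : Finset ℕ) (k0 k1 k2 k3 : ℕ)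
    (h0 : k0 ≤ (Q.filter (fun x => x % 4 = 0)).card)
    (h1 : k1 ≤ (Q.filter (fun x => x % 4 = 1)).card)
    (h2 : k2 ≤ (Q.filter (fun x => x % 4 = 2)).card)
    (h3 : k3 ≤ (Q.filter (fun x => x % 4 = 3)).card) :
    ∃ T ⊆ Q, T.card = k0 + k1 + k2 + k3 ∧
      (T.filter (fun x => x % 4 = 0)).card = k0 ∧
      (T.filter (fun x => x % 4 = 1)).card = k1 ∧
      (T.filter (fun x => x % 4 = 2)).card = k2 ∧
      (T.filter (fun x => x % 4 = 3)).card = k3 := by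
  obtain ⟨t0, ht0, hc0⟩ := Finset.exists_subset_card_eq h0
  obtain ⟨t1, ht1, hc1⟩ := Finset.exists_subset_card_eq h1
  obtain ⟨t2, ht2, hc2⟩ := Finset.exists_subset_card_eq h2
  obtain ⟨t3, ht3, hc3⟩ := Finset.exists_subset_card_eq h3
  have r0 : ∀ x ∈ t0, x % 4 = 0 := fun x hx => (Finset.mem_filter.mp (ht0 hx)).2
  have r1 : ∀ x ∈ t1, x % 4 = 1 := fun x hx => (Finset.mem_filter.mp (ht1 hx)).2
  have r2 : ∀ x ∈ t2, x % 4 = 2 := fun x hx => (Finset.mem_filter.mp (ht2 hx)).2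
  have r3 : ∀ x ∈ t3, x % 4 = 3 := fun x hx => (Finset.mem_filter.mp (ht3 hx)).2
  have e0 : (t0 ∪ t1 ∪ t2 ∪ t3).filter (fun x => x % 4 = 0) = t0 := by
    ext x
    simp only [Finset.mem_filter, Finset.mem_union]
    constructor
    · rintro ⟨(((h | h) | h) | h), hx⟩
      · exact h
      · exact absurd hx (by have := r1 x h; omega)
      · exact absurd hx (by have := r2 x h; omega)
      · exact absurd hx (by have := r3 x h; omega)
    · intro h; exact ⟨by tauto, r0 x h⟩
  have e1 : (t0 ∪ t1 ∪ t2 ∪ t3).filter (fun x => x % 4 = 1) = t1 := by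
    ext x
    simp only [Finset.mem_filter, Finset.mem_union]
    constructor
    · rintro ⟨(((h | h) | h) | h), hx⟩
      · exact absurd hx (by have := r0 x h; omega)
      · exact h
      · exact absurd hx (by have := r2 x h; omega)
      · exact absurd hx (by have := r3 x h; omega)
    · intro h; exact ⟨by tauto, r1 x h⟩
  have e2 : (t0 ∪ t1 ∪ t2 ∪ t3).filter (fun x => x % 4 = 2) = t2 := by
    ext x
    simp only [Finset.mem_filter, Finset.mem_union]
    constructor
    · rintro ⟨(((h | h) | h) | h), hx⟩
      · exact absurd hx (by have := r0 x h; omega)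
      · exact absurd hx (by have := r1 x h; omega)
      · exact h
      · exact absurd hx (by have := r3 x h; omega)
    · intro h; exact ⟨by tauto, r2 x h⟩
  have e3 : (t0 ∪ t1 ∪ t2 ∪ t3).filter (fun x => x % 4 = 3) = t3 := by
    ext x
    simp only [Finset.mem_filter, Finset.mem_union]
    constructor
    · rintro ⟨(((h | h) | h) | h), hx⟩
      · exact absurd hx (by have := r0 x h; omega)
      · exact absurd hx (by have := r1 x h; omega)
      · exact absurd hx (by have := r2 x h; omega)
      · exact h
    · intro h; exact ⟨by tauto, r3 x h⟩
  refine ⟨t0 ∪ t1 ∪ t2 ∪ t3, ?_, ?_, ?_, ?_, ?_, ?_⟩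
  · refine Finset.union_subset (Finset.union_subset (Finset.union_subset ?_ ?_) ?_) ?_
    · exact ht0.trans (Finset.filter_subset _ _)
    · exact ht1.trans (Finset.filter_subset _ _)
    · exact ht2.trans (Finset.filter_subset _ _)
    · exact ht3.trans (Finset.filter_subset _ _)
  · rw [card_split (t0 ∪ t1 ∪ t2 ∪ t3), e0, e1, e2, e3, hc0, hc1, hc2, hc3]
  · rw [e0, hc0]
  · rw [e1, hc1]
  · rw [e2, hc2]
  · rw [e3, hc3]

lemma ne_of_filter_card_zero {T : Finset ℕ} {s : ℕ}
    (h : (T.filter (fun x => x % 4 = s)).card = 0) : ∀ x ∈ T, x % 4 ≠ s := by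
  intro x hx hc
  have he := Finset.card_eq_zero.mp h
  exact Finset.notMem_empty x (he ▸ Finset.mem_filter.mpr ⟨hx, hc⟩)

lemma memG1_core (n : ℕ) (Q : Finset ℕ) (hQ : Q ⊆ Finset.Icc 1 n) (i : ℕ)
    (hi : i ∈ Finset.Icc 1 4) (T : Finset ℕ) (hTQ : T ⊆ Q) (hcard : T.card = 4)
    (h1 : (T.filter (fun x => x % 4 = i % 4)).card = 2)
    (h2 : (T.filter (fun x => x % 4 = (i + 1) % 4)).card = 1)
    (h3 : (T.filter (fun x => x % 4 = (i + 2) % 4)).card = 1) :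
    T ∈ G1deg4 n := by
  simp only [G1deg4, Finset.mem_filter, Finset.mem_powersetCard]
  refine ⟨⟨hTQ.trans hQ, hcard⟩, i, hi, ?_, ?_, ?_⟩
  · rw [inter_resClass n i T (hTQ.trans hQ)]; exact h1
  · rw [inter_resClass n (i + 1) T (hTQ.trans hQ)]; exact h2
  · rw [inter_resClass n (i + 2) T (hTQ.trans hQ)]; exact h3

lemma memG2_core (n : ℕ) (Q : Finset ℕ) (hQ : Q ⊆ Finset.Icc 1 n) (i j : ℕ)
    (hi : i ∈ Finset.Icc 1 4) (hj : j ∈ Finset.Icc 1 4) (hij : i < j)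
    (T : Finset ℕ) (hTQ : T ⊆ Q) (hcard : T.card = 4)
    (h1 : (T.filter (fun x => x % 4 = i % 4)).card = 2)
    (h2 : (T.filter (fun x => x % 4 = j % 4)).card = 2) :
    T ∈ G2deg4 n := by
  simp only [G2deg4, Finset.mem_filter, Finset.mem_powersetCard]
  refine ⟨⟨hTQ.trans hQ, hcard⟩, i, hi, j, hj, hij, ?_, ?_⟩
  · rw [inter_resClass n i T (hTQ.trans hQ)]; exact h1
  · rw [inter_resClass n j T (hTQ.trans hQ)]; exact h2

lemma memG3_core (n : ℕ) (Q : Finset ℕ) (hQ : Q ⊆ Finset.Icc 1 n) (i : ℕ)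
    (hi : i ∈ Finset.Icc 1 4) (T : Finset ℕ) (hTQ : T ⊆ Q) (hcard : T.card = 4)
    (h1 : (T.filter (fun x => x % 4 = i % 4)).card = 3)
    (h2 : (T.filter (fun x => x % 4 = (i + 3) % 4)).card = 1) :
    T ∈ G3deg4 n := by
  simp only [G3deg4, Finset.mem_filter, Finset.mem_powersetCard]
  refine ⟨⟨hTQ.trans hQ, hcard⟩, i, hi, ?_, ?_⟩
  · rw [inter_resClass n i T (hTQ.trans hQ)]; exact h1
  · rw [inter_resClass n (i + 3) T (hTQ.trans hQ)]; exact h2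

lemma memG4_core (n : ℕ) (Q : Finset ℕ) (hQ : Q ⊆ Finset.Icc 1 n) (i : ℕ)
    (hi : i ∈ Finset.Icc 1 4) (T : Finset ℕ) (hTQ : T ⊆ Q) (hcard : T.card = 4)
    (hsub : ∀ x ∈ T, x % 4 = i % 4) :
    T ∈ G4deg4 n := by
  simp only [G4deg4, Finset.mem_filter, Finset.mem_powersetCard]
  refine ⟨⟨hTQ.trans hQ, hcard⟩, i, hi, ?_⟩
  intro x hx
  simp only [resClass4, Finset.mem_filter]
  exact ⟨hQ (hTQ hx), hsub x hx⟩

lemma memG1 (n : ℕ) (Q : Finset ℕ) (hQ : Q ⊆ Finset.Icc 1 n) (r s t : ℕ)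
    (hr : r < 4) (hs : s = (r + 1) % 4) (ht : t = (r + 2) % 4)
    (h2 : 2 ≤ (Q.filter (fun x => x % 4 = r)).card)
    (hb : 1 ≤ (Q.filter (fun x => x % 4 = s)).card)
    (hc : 1 ≤ (Q.filter (fun x => x % 4 = t)).card) :
    ∃ T ∈ G1deg4 n, T ⊆ Q := by
  subst hs ht
  interval_cases r <;> norm_num at hb hc
  · obtain ⟨T, hTQ, hcard, e0, e1, e2, e3⟩ := build Q 2 1 1 0 h2 (Finset.one_le_card.mpr hb) (Finset.one_le_card.mpr hc) (Nat.zero_le _)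
    exact ⟨T, memG1_core n Q hQ 4 (by simp) T hTQ (by omega) (by simpa using e0)
      (by simpa using e1) (by simpa using e2), hTQ⟩
  · obtain ⟨T, hTQ, hcard, e0, e1, e2, e3⟩ := build Q 0 2 1 1 (Nat.zero_le _) h2 (Finset.one_le_card.mpr hb) (Finset.one_le_card.mpr hc)
    exact ⟨T, memG1_core n Q hQ 1 (by simp) T hTQ (by omega) (by simpa using e1)
      (by simpa using e2) (by simpa using e3), hTQ⟩
  · obtain ⟨T, hTQ, hcard, e0, e1, e2, e3⟩ := build Q 1 0 2 1 (Finset.one_le_card.mpr hc) (Nat.zero_le _) h2 (Finset.one_le_card.mpr hb)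
    exact ⟨T, memG1_core n Q hQ 2 (by simp) T hTQ (by omega) (by simpa using e2)
      (by simpa using e3) (by simpa using e0), hTQ⟩
  · obtain ⟨T, hTQ, hcard, e0, e1, e2, e3⟩ := build Q 1 1 0 2 (Finset.one_le_card.mpr hb) (Finset.one_le_card.mpr hc) (Nat.zero_le _) h2
    exact ⟨T, memG1_core n Q hQ 3 (by simp) T hTQ (by omega) (by simpa using e3)
      (by simpa using e0) (by simpa using e1), hTQ⟩

lemma memG2 (n : ℕ) (Q : Finset ℕ) (hQ : Q ⊆ Finset.Icc 1 n) (r s : ℕ)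
    (hrs : r < s) (hs4 : s < 4)
    (h2r : 2 ≤ (Q.filter (fun x => x % 4 = r)).card)
    (h2s : 2 ≤ (Q.filter (fun x => x % 4 = s)).card) :
    ∃ T ∈ G2deg4 n, T ⊆ Q := by
  have hr4 : r < 4 := lt_trans hrs hs4
  interval_cases r <;> interval_cases s
  · obtain ⟨T, hTQ, hcard, e0, e1, e2, e3⟩ :=
      build Q 2 2 0 0 h2r h2s (Nat.zero_le _) (Nat.zero_le _)
    exact ⟨T, memG2_core n Q hQ 1 4 (by simp) (by simp) (by norm_num) T hTQ (by omega)
      (by simpa using e1) (by simpa using e0), hTQ⟩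
  · obtain ⟨T, hTQ, hcard, e0, e1, e2, e3⟩ :=
      build Q 2 0 2 0 h2r (Nat.zero_le _) h2s (Nat.zero_le _)
    exact ⟨T, memG2_core n Q hQ 2 4 (by simp) (by simp) (by norm_num) T hTQ (by omega)
      (by simpa using e2) (by simpa using e0), hTQ⟩
  · obtain ⟨T, hTQ, hcard, e0, e1, e2, e3⟩ :=
      build Q 2 0 0 2 h2r (Nat.zero_le _) (Nat.zero_le _) h2s
    exact ⟨T, memG2_core n Q hQ 3 4 (by simp) (by simp) (by norm_num) T hTQ (by omega)
      (by simpa using e3) (by simpa using e0), hTQ⟩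
  · obtain ⟨T, hTQ, hcard, e0, e1, e2, e3⟩ :=
      build Q 0 2 2 0 (Nat.zero_le _) h2r h2s (Nat.zero_le _)
    exact ⟨T, memG2_core n Q hQ 1 2 (by simp) (by simp) (by norm_num) T hTQ (by omega)
      (by simpa using e1) (by simpa using e2), hTQ⟩
  · obtain ⟨T, hTQ, hcard, e0, e1, e2, e3⟩ :=
      build Q 0 2 0 2 (Nat.zero_le _) h2r (Nat.zero_le _) h2s
    exact ⟨T, memG2_core n Q hQ 1 3 (by simp) (by simp) (by norm_num) T hTQ (by omega)
      (by simpa using e1) (by simpa using e3), hTQ⟩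
  · obtain ⟨T, hTQ, hcard, e0, e1, e2, e3⟩ :=
      build Q 0 0 2 2 (Nat.zero_le _) (Nat.zero_le _) h2r h2s
    exact ⟨T, memG2_core n Q hQ 2 3 (by simp) (by simp) (by norm_num) T hTQ (by omega)
      (by simpa using e2) (by simpa using e3), hTQ⟩

lemma memG3 (n : ℕ) (Q : Finset ℕ) (hQ : Q ⊆ Finset.Icc 1 n) (r s : ℕ)
    (hr : r < 4) (hs : s = (r + 3) % 4)
    (h3 : 3 ≤ (Q.filter (fun x => x % 4 = r)).card)
    (h1 : 1 ≤ (Q.filter (fun x => x % 4 = s)).card) :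
    ∃ T ∈ G3deg4 n, T ⊆ Q := by
  subst hs
  interval_cases r <;> norm_num at h1
  · obtain ⟨T, hTQ, hcard, e0, e1, e2, e3⟩ := build Q 3 0 0 1 h3 (Nat.zero_le _) (Nat.zero_le _) (Finset.one_le_card.mpr h1)
    exact ⟨T, memG3_core n Q hQ 4 (by simp) T hTQ (by omega) (by simpa using e0)
      (by simpa using e3), hTQ⟩
  · obtain ⟨T, hTQ, hcard, e0, e1, e2, e3⟩ := build Q 1 3 0 0 (Finset.one_le_card.mpr h1) h3 (Nat.zero_le _) (Nat.zero_le _)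
    exact ⟨T, memG3_core n Q hQ 1 (by simp) T hTQ (by omega) (by simpa using e1)
      (by simpa using e0), hTQ⟩
  · obtain ⟨T, hTQ, hcard, e0, e1, e2, e3⟩ := build Q 0 1 3 0 (Nat.zero_le _) (Finset.one_le_card.mpr h1) h3 (Nat.zero_le _)
    exact ⟨T, memG3_core n Q hQ 2 (by simp) T hTQ (by omega) (by simpa using e2)
      (by simpa using e1), hTQ⟩
  · obtain ⟨T, hTQ, hcard, e0, e1, e2, e3⟩ := build Q 0 0 1 3 (Nat.zero_le _) (Nat.zero_le _) (Finset.one_le_card.mpr h1) h3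
    exact ⟨T, memG3_core n Q hQ 3 (by simp) T hTQ (by omega) (by simpa using e3)
      (by simpa using e2), hTQ⟩

lemma memG4 (n : ℕ) (Q : Finset ℕ) (hQ : Q ⊆ Finset.Icc 1 n) (r : ℕ) (hr : r < 4)
    (h : 4 ≤ (Q.filter (fun x => x % 4 = r)).card) :
    ∃ T ∈ G4deg4 n, T ⊆ Q := by
  interval_cases r
  · obtain ⟨T, hTQ, hcard, e0, e1, e2, e3⟩ :=
      build Q 4 0 0 0 h (Nat.zero_le _) (Nat.zero_le _) (Nat.zero_le _)
    refine ⟨T, memG4_core n Q hQ 4 (by simp) T hTQ (by omega) ?_, hTQ⟩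
    intro x hx
    have n1 := ne_of_filter_card_zero e1 x hx
    have n2 := ne_of_filter_card_zero e2 x hx
    have n3 := ne_of_filter_card_zero e3 x hx
    omega
  · obtain ⟨T, hTQ, hcard, e0, e1, e2, e3⟩ :=
      build Q 0 4 0 0 (Nat.zero_le _) h (Nat.zero_le _) (Nat.zero_le _)
    refine ⟨T, memG4_core n Q hQ 1 (by simp) T hTQ (by omega) ?_, hTQ⟩
    intro x hx
    have n0 := ne_of_filter_card_zero e0 x hx
    have n2 := ne_of_filter_card_zero e2 x hx
    have n3 := ne_of_filter_card_zero e3 x hx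
    omega
  · obtain ⟨T, hTQ, hcard, e0, e1, e2, e3⟩ :=
      build Q 0 0 4 0 (Nat.zero_le _) (Nat.zero_le _) h (Nat.zero_le _)
    refine ⟨T, memG4_core n Q hQ 2 (by simp) T hTQ (by omega) ?_, hTQ⟩
    intro x hx
    have n0 := ne_of_filter_card_zero e0 x hx
    have n1 := ne_of_filter_card_zero e1 x hx
    have n3 := ne_of_filter_card_zero e3 x hx
    omega
  · obtain ⟨T, hTQ, hcard, e0, e1, e2, e3⟩ :=
      build Q 0 0 0 4 (Nat.zero_le _) (Nat.zero_le _) (Nat.zero_le _) h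
    refine ⟨T, memG4_core n Q hQ 3 (by simp) T hTQ (by omega) ?_, hTQ⟩
    intro x hx
    have n0 := ne_of_filter_card_zero e0 x hx
    have n1 := ne_of_filter_card_zero e1 x hx
    have n2 := ne_of_filter_card_zero e2 x hx
    omega

/-- Upper perfectness for the degree-4 algorithm: for `n ≥ 16` with `4 ∣ n`, every
5-element subset of `{1,…,n}` contains some element of `G_1 ∪ G_2 ∪ G_3 ∪ G_4`. -/
theorem stmt19 (n : ℕ) (hn : 16 ≤ n) (h4 : 4 ∣ n) :
    ∀ Q ∈ (Finset.Icc 1 n).powersetCard 5,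
      ∃ T ∈ G1deg4 n ∪ G2deg4 n ∪ G3deg4 n ∪ G4deg4 n, T ⊆ Q := by
  intro Q hQmem
  rw [Finset.mem_powersetCard] at hQmem
  obtain ⟨hQ, hQcard⟩ := hQmem
  have hsum := card_split Q
  rw [hQcard] at hsum
  by_cases h40 : 4 ≤ (Q.filter (fun x => x % 4 = 0)).card
  · obtain ⟨T, hT, hTQ⟩ := memG4 n Q hQ 0 (by norm_num) h40
    exact ⟨T, Finset.mem_union_right _ hT, hTQ⟩
  by_cases h41 : 4 ≤ (Q.filter (fun x => x % 4 = 1)).card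
  · obtain ⟨T, hT, hTQ⟩ := memG4 n Q hQ 1 (by norm_num) h41
    exact ⟨T, Finset.mem_union_right _ hT, hTQ⟩
  by_cases h42 : 4 ≤ (Q.filter (fun x => x % 4 = 2)).card
  · obtain ⟨T, hT, hTQ⟩ := memG4 n Q hQ 2 (by norm_num) h42
    exact ⟨T, Finset.mem_union_right _ hT, hTQ⟩
  by_cases h43 : 4 ≤ (Q.filter (fun x => x % 4 = 3)).card
  · obtain ⟨T, hT, hTQ⟩ := memG4 n Q hQ 3 (by norm_num) h43
    exact ⟨T, Finset.mem_union_right _ hT, hTQ⟩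
  by_cases h01 : 2 ≤ (Q.filter (fun x => x % 4 = 0)).card ∧ 2 ≤ (Q.filter (fun x => x % 4 = 1)).card
  · obtain ⟨T, hT, hTQ⟩ := memG2 n Q hQ 0 1 (by norm_num) (by norm_num) h01.1 h01.2
    exact ⟨T, Finset.mem_union_left _ (Finset.mem_union_left _ (Finset.mem_union_right _ hT)), hTQ⟩
  by_cases h02 : 2 ≤ (Q.filter (fun x => x % 4 = 0)).card ∧ 2 ≤ (Q.filter (fun x => x % 4 = 2)).card
  · obtain ⟨T, hT, hTQ⟩ := memG2 n Q hQ 0 2 (by norm_num) (by norm_num) h02.1 h02.2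
    exact ⟨T, Finset.mem_union_left _ (Finset.mem_union_left _ (Finset.mem_union_right _ hT)), hTQ⟩
  by_cases h03 : 2 ≤ (Q.filter (fun x => x % 4 = 0)).card ∧ 2 ≤ (Q.filter (fun x => x % 4 = 3)).card
  · obtain ⟨T, hT, hTQ⟩ := memG2 n Q hQ 0 3 (by norm_num) (by norm_num) h03.1 h03.2
    exact ⟨T, Finset.mem_union_left _ (Finset.mem_union_left _ (Finset.mem_union_right _ hT)), hTQ⟩
  by_cases h12 : 2 ≤ (Q.filter (fun x => x % 4 = 1)).card ∧ 2 ≤ (Q.filter (fun x => x % 4 = 2)).card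
  · obtain ⟨T, hT, hTQ⟩ := memG2 n Q hQ 1 2 (by norm_num) (by norm_num) h12.1 h12.2
    exact ⟨T, Finset.mem_union_left _ (Finset.mem_union_left _ (Finset.mem_union_right _ hT)), hTQ⟩
  by_cases h13 : 2 ≤ (Q.filter (fun x => x % 4 = 1)).card ∧ 2 ≤ (Q.filter (fun x => x % 4 = 3)).card
  · obtain ⟨T, hT, hTQ⟩ := memG2 n Q hQ 1 3 (by norm_num) (by norm_num) h13.1 h13.2
    exact ⟨T, Finset.mem_union_left _ (Finset.mem_union_left _ (Finset.mem_union_right _ hT)), hTQ⟩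
  by_cases h23 : 2 ≤ (Q.filter (fun x => x % 4 = 2)).card ∧ 2 ≤ (Q.filter (fun x => x % 4 = 3)).card
  · obtain ⟨T, hT, hTQ⟩ := memG2 n Q hQ 2 3 (by norm_num) (by norm_num) h23.1 h23.2
    exact ⟨T, Finset.mem_union_left _ (Finset.mem_union_left _ (Finset.mem_union_right _ hT)), hTQ⟩
  have hbig : 2 ≤ (Q.filter (fun x => x % 4 = 0)).card ∨ 2 ≤ (Q.filter (fun x => x % 4 = 1)).card
      ∨ 2 ≤ (Q.filter (fun x => x % 4 = 2)).card ∨ 2 ≤ (Q.filter (fun x => x % 4 = 3)).card := by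
    omega
  rcases hbig with hA | hB | hC | hD
  · by_cases hg : 3 ≤ (Q.filter (fun x => x % 4 = 0)).card ∧ 1 ≤ (Q.filter (fun x => x % 4 = 3)).card
    · obtain ⟨T, hT, hTQ⟩ := memG3 n Q hQ 0 3 (by norm_num) (by norm_num) hg.1 hg.2
      exact ⟨T, Finset.mem_union_left _ (Finset.mem_union_right _ hT), hTQ⟩
    · have hkey : 1 ≤ (Q.filter (fun x => x % 4 = 1)).card ∧
          1 ≤ (Q.filter (fun x => x % 4 = 2)).card := by omega
      obtain ⟨T, hT, hTQ⟩ := memG1 n Q hQ 0 1 2 (by norm_num) (by norm_num) (by norm_num)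
        hA hkey.1 hkey.2
      exact ⟨T, Finset.mem_union_left _ (Finset.mem_union_left _ (Finset.mem_union_left _ hT)), hTQ⟩
  · by_cases hg : 3 ≤ (Q.filter (fun x => x % 4 = 1)).card ∧ 1 ≤ (Q.filter (fun x => x % 4 = 0)).card
    · obtain ⟨T, hT, hTQ⟩ := memG3 n Q hQ 1 0 (by norm_num) (by norm_num) hg.1 hg.2
      exact ⟨T, Finset.mem_union_left _ (Finset.mem_union_right _ hT), hTQ⟩
    · have hkey : 1 ≤ (Q.filter (fun x => x % 4 = 2)).card ∧
          1 ≤ (Q.filter (fun x => x % 4 = 3)).card := by omega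
      obtain ⟨T, hT, hTQ⟩ := memG1 n Q hQ 1 2 3 (by norm_num) (by norm_num) (by norm_num)
        hB hkey.1 hkey.2
      exact ⟨T, Finset.mem_union_left _ (Finset.mem_union_left _ (Finset.mem_union_left _ hT)), hTQ⟩
  · by_cases hg : 3 ≤ (Q.filter (fun x => x % 4 = 2)).card ∧ 1 ≤ (Q.filter (fun x => x % 4 = 1)).card
    · obtain ⟨T, hT, hTQ⟩ := memG3 n Q hQ 2 1 (by norm_num) (by norm_num) hg.1 hg.2
      exact ⟨T, Finset.mem_union_left _ (Finset.mem_union_right _ hT), hTQ⟩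
    · have hkey : 1 ≤ (Q.filter (fun x => x % 4 = 3)).card ∧
          1 ≤ (Q.filter (fun x => x % 4 = 0)).card := by omega
      obtain ⟨T, hT, hTQ⟩ := memG1 n Q hQ 2 3 0 (by norm_num) (by norm_num) (by norm_num)
        hC hkey.1 hkey.2
      exact ⟨T, Finset.mem_union_left _ (Finset.mem_union_left _ (Finset.mem_union_left _ hT)), hTQ⟩
  · by_cases hg : 3 ≤ (Q.filter (fun x => x % 4 = 3)).card ∧ 1 ≤ (Q.filter (fun x => x % 4 = 2)).card
    · obtain ⟨T, hT, hTQ⟩ := memG3 n Q hQ 3 2 (by norm_num) (by norm_num) hg.1 hg.2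
      exact ⟨T, Finset.mem_union_left _ (Finset.mem_union_right _ hT), hTQ⟩
    · have hkey : 1 ≤ (Q.filter (fun x => x % 4 = 0)).card ∧
          1 ≤ (Q.filter (fun x => x % 4 = 1)).card := by omega
      obtain ⟨T, hT, hTQ⟩ := memG1 n Q hQ 3 0 1 (by norm_num) (by norm_num) (by norm_num)
        hD hkey.1 hkey.2
      exact ⟨T, Finset.mem_union_left _ (Finset.mem_union_left _ (Finset.mem_union_left _ hT)), hTQ⟩
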